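/- (Necessary condition of invariance.) Let u be admissible for the functional 𝒥[u] = ∫_{Δ_n} F(t, u(t), ∇_{B_{P¹}}^α u(t), ∇_{K_{P²}}^β u(t)) dt with F ∈ C¹, and let ξ ∈ C¹(Δ̄_n × ℝ^N; ℝ^N) be such that for the family of transformations ū_ε(t) = u(t) + ε ξ(t, u(t)) the functions B_{P¹_{t_i}}^{α_i}(ξ_k(·, u(·))) and K_{P²_{t_i}}^{β_i}(ξ_k(·, u(·))) exist and are continuous on Δ̄_n. If 𝒥 is invariant under this family, i.e., for every ε near 0 and every subbox Δ_n* ⊆ Δ_n one has ∫_{Δ_n*} F(t, u, ∇_{B_{P¹}}^α u, ∇_{K_{P²}}^β u) dt = ∫_{Δ_n*} F(t, ū_ε, ∇_{B_{P¹}}^α ū_ε, ∇_{K_{P²}}^β ū_ε) dt, then for all t ∈ Δ_n: Σ_{k=1}^N ( ∂F/∂u_k {u}(t) · ξ_k(t, u(t)) + Σ_{i=1}^n [ ∂F/∂(B_{P¹_{t_i}}^{α_i} u_k){u}(t) · B_{P¹_{t_i}}^{α_i}(ξ_k(·, u(·)))(t) + ∂F/∂(K_{P²_{t_i}}^{β_i}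 u_k){u}(t) · K_{P²_{t_i}}^{β_i}(ξ_k(·, u(·)))(t) ] ) = 0. -/

import Mathlib

open MeasureTheory

/-- The open box `Δ_n = (a_1,b_1) × ⋯ × (a_n,b_n) ⊂ ℝⁿ`. -/
def box (n : ℕ) (a b : Fin n → ℝ) : Set (Fin n → ℝ) :=
  Set.univ.pi fun i => Set.Ioo (a i) (b i)

/-- The closed box `Δ̄_n = [a_1,b_1] × ⋯ × [a_n,b_n]`. -/
def closedBox (n : ℕ) (a b : Fin n → ℝ) : Set (Fin n → ℝ) :=
  Set.univ.pi fun i => Set.Icc (a i) (b i)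

/-- The boundary `∂Δ_n` of the box. -/
def boundaryBox (n : ℕ) (a b : Fin n → ℝ) : Set (Fin n → ℝ) :=
  closedBox n a b \ box n a b

/-- The generalized partial fractional integral `K_{P_{t_i}}^{α}` of order `α`
(with kernel `k = k_α`) and parameter set `P_{t_i} = ⟨a_i, t_i, b_i, p, q⟩`:
`(K f)(t) = p ∫_{a_i}^{t_i} k(t_i−τ) f(…,τ,…) dτ + q ∫_{t_i}^{b_i} k(τ−t_i) f(…,τ,…) dτ`. -/
noncomputable def partK (n : ℕ) (a b : Fin n → ℝ) (i : Fin n) (p q : ℝ) (k : ℝ → ℝ)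
    (f : (Fin n → ℝ) → ℝ) (t : Fin n → ℝ) : ℝ :=
  p * ∫ τ in (a i)..(t i), k (t i - τ) * f (Function.update t i τ) +
  q * ∫ τ in (t i)..(b i), k (τ - t i) * f (Function.update t i τ)

/-- Partial derivative `∂f/∂t_i`. -/
noncomputable def pderiv (n : ℕ) (i : Fin n) (f : (Fin n → ℝ) → ℝ) (t : Fin n → ℝ) : ℝ :=
  deriv (fun s => f (Function.update t i s)) (t i)

/-- The generalized partial Riemann–Liouville fractional derivative
`A_{P_{t_i}}^{α} f = ∂/∂t_i (K_{P_{t_i}}^{1−α} f)`, where `k` is the kernel `k_{1−α}`. -/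
noncomputable def partA (n : ℕ) (a b : Fin n → ℝ) (i : Fin n) (p q : ℝ) (k : ℝ → ℝ)
    (f : (Fin n → ℝ) → ℝ) (t : Fin n → ℝ) : ℝ :=
  pderiv n i (partK n a b i p q k f) t

/-- The generalized partial Caputo fractional derivative
`B_{P_{t_i}}^{α} f = K_{P_{t_i}}^{1−α} (∂f/∂t_i)`, where `k` is the kernel `k_{1−α}`. -/
noncomputable def partB (n : ℕ) (a b : Fin n → ℝ) (i : Fin n) (p q : ℝ) (k : ℝ → ℝ)
    (f : (Fin n → ℝ) → ℝ) (t : Fin n → ℝ) : ℝ :=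
  partK n a b i p q k (pderiv n i f) t

/-- `∂F/∂u_k`: partial derivative of the Lagrangian `F(t, u, G, H)` with respect to
the `k`-th component of the second argument. -/
noncomputable def dFu (n N : ℕ)
    (F : (Fin n → ℝ) → (Fin N → ℝ) → (Fin n → Fin N → ℝ) → (Fin n → Fin N → ℝ) → ℝ)
    (k : Fin N) (t : Fin n → ℝ) (u : Fin N → ℝ) (G H : Fin n → Fin N → ℝ) : ℝ :=
  deriv (fun y => F t (Function.update u k y) G H) (u k)

/-- `∂F/∂G_{ik}`: partial derivative of `F(t, u, G, H)` with respect to the `(i,k)` entry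
of the third argument (the fractional gradient `∇_{B_{P¹}}^α u`). -/
noncomputable def dFG (n N : ℕ)
    (F : (Fin n → ℝ) → (Fin N → ℝ) → (Fin n → Fin N → ℝ) → (Fin n → Fin N → ℝ) → ℝ)
    (i : Fin n) (k : Fin N) (t : Fin n → ℝ) (u : Fin N → ℝ) (G H : Fin n → Fin N → ℝ) : ℝ :=
  deriv (fun y => F t u (Function.update G i (Function.update (G i) k y)) H) (G i k)

/-- `∂F/∂H_{ik}`: partial derivative of `F(t, u, G, H)` with respect to the `(i,k)` entry
of the fourth argument (the fractional gradient `∇_{K_{P²}}^β u`). -/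
noncomputable def dFH (n N : ℕ)
    (F : (Fin n → ℝ) → (Fin N → ℝ) → (Fin n → Fin N → ℝ) → (Fin n → Fin N → ℝ) → ℝ)
    (i : Fin n) (k : Fin N) (t : Fin n → ℝ) (u : Fin N → ℝ) (G H : Fin n → Fin N → ℝ) : ℝ :=
  deriv (fun y => F t u G (Function.update H i (Function.update (H i) k y))) (H i k)

/-- The generalized fractional gradient `∇_{B_{P}}^{α}` of a vector function,
as a matrix `(i,k) ↦ B_{P_{t_i}}^{α_i} w_k (t)`; `kk i` is the kernel `k_{1−α_i}`. -/
noncomputable def gradB (n N : ℕ) (a b : Fin n → ℝ) (p q : Fin n → ℝ) (kk : Fin n → ℝ → ℝ)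
    (w : (Fin n → ℝ) → Fin N → ℝ) (t : Fin n → ℝ) : Fin n → Fin N → ℝ :=
  fun i k => partB n a b i (p i) (q i) (kk i) (fun s => w s k) t

/-- The generalized fractional gradient `∇_{K_{P}}^{β}` of a vector function,
as a matrix `(i,k) ↦ K_{P_{t_i}}^{β_i} w_k (t)`; `kk i` is the kernel `k_{β_i}`. -/
noncomputable def gradK (n N : ℕ) (a b : Fin n → ℝ) (p q : Fin n → ℝ) (kk : Fin n → ℝ → ℝ)
    (w : (Fin n → ℝ) → Fin N → ℝ) (t : Fin n → ℝ) : Fin n → Fin N → ℝ :=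
  fun i k => partK n a b i (p i) (q i) (kk i) (fun s => w s k) t

section AuxNCI
open MeasureTheory Set



lemma aux_intInt_left {κ : ℝ → ℝ} {A B c : ℝ} (hκ : IntegrableOn κ (Set.Ioo 0 (B - A)))
    (hA : A ≤ c) (hB : c ≤ B) {D : ℝ → ℝ}
    (hD : AEStronglyMeasurable D (volume.restrict (Set.Ioo A c)))
    (hbd : ∃ C, ∀ τ ∈ Set.Ioo A c, |D τ| ≤ C) :
    IntervalIntegrable (fun τ => κ (c - τ) * D τ) volume A c := by
  rw [intervalIntegrable_iff_integrableOn_Ioo_of_le hA]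
  have hκ1 : IntegrableOn κ (Set.Ioo 0 (c - A)) :=
    hκ.mono_set (Set.Ioo_subset_Ioo le_rfl (by linarith))
  have hκ2 : IntervalIntegrable κ volume 0 (c - A) := by
    rw [intervalIntegrable_iff_integrableOn_Ioo_of_le (by linarith)]
    exact hκ1
  have hκ3 : IntervalIntegrable (fun τ => κ (c - τ)) volume A c := by
    have := (hκ2.comp_sub_left c).symm
    simpa using this
  have hκ4 : IntegrableOn (fun τ => κ (c - τ)) (Set.Ioo A c) := by
    rwa [intervalIntegrable_iff_integrableOn_Ioo_of_le hA] at hκ3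
  obtain ⟨C, hC⟩ := hbd
  have : Integrable (fun τ => D τ * κ (c - τ)) (volume.restrict (Set.Ioo A c)) := by
    refine Integrable.bdd_mul (c := C) hκ4 hD ?_
    refine (ae_restrict_iff' measurableSet_Ioo).2 (Filter.Eventually.of_forall ?_)
    intro x hx
    simpa [Real.norm_eq_abs] using hC x hx
  exact this.congr (Filter.Eventually.of_forall fun x => mul_comm _ _)

lemma aux_intInt_right {κ : ℝ → ℝ} {A B c : ℝ} (hκ : IntegrableOn κ (Set.Ioo 0 (B - A)))
    (hA : A ≤ c) (hB : c ≤ B) {D : ℝ → ℝ}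
    (hD : AEStronglyMeasurable D (volume.restrict (Set.Ioo c B)))
    (hbd : ∃ C, ∀ τ ∈ Set.Ioo c B, |D τ| ≤ C) :
    IntervalIntegrable (fun τ => κ (τ - c) * D τ) volume c B := by
  rw [intervalIntegrable_iff_integrableOn_Ioo_of_le hB]
  have hκ1 : IntegrableOn κ (Set.Ioo 0 (B - c)) :=
    hκ.mono_set (Set.Ioo_subset_Ioo le_rfl (by linarith))
  have hκ2 : IntervalIntegrable κ volume 0 (B - c) := by
    rw [intervalIntegrable_iff_integrableOn_Ioo_of_le (by linarith)]
    exact hκ1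
  have hκ3 : IntervalIntegrable (fun τ => κ (τ - c)) volume c B := by
    have := hκ2.comp_sub_right c
    simpa using this
  have hκ4 : IntegrableOn (fun τ => κ (τ - c)) (Set.Ioo c B) := by
    rwa [intervalIntegrable_iff_integrableOn_Ioo_of_le hB] at hκ3
  obtain ⟨C, hC⟩ := hbd
  have : Integrable (fun τ => D τ * κ (τ - c)) (volume.restrict (Set.Ioo c B)) := by
    refine Integrable.bdd_mul (c := C) hκ4 hD ?_
    refine (ae_restrict_iff' measurableSet_Ioo).2 (Filter.Eventually.of_forall ?_)
    intro x hx
    simpa [Real.norm_eq_abs] using hC x hx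
  exact this.congr (Filter.Eventually.of_forall fun x => mul_comm _ _)

lemma aux_deriv_meas_bd {A B : ℝ} (hAB : A < B) {ψ : ℝ → ℝ}
    (hψ : ContDiffOn ℝ 1 ψ (Set.Icc A B)) :
    AEStronglyMeasurable (deriv ψ) (volume.restrict (Set.Ioo A B)) ∧
      ∃ C, ∀ τ ∈ Set.Ioo A B, |deriv ψ τ| ≤ C := by
  have hcont : ContinuousOn (derivWithin ψ (Set.Icc A B)) (Set.Icc A B) :=
    hψ.continuousOn_derivWithin (uniqueDiffOn_Icc hAB) le_rfl
  have heq : ∀ τ ∈ Set.Ioo A B, derivWithin ψ (Set.Icc A B) τ = deriv ψ τ := by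
    intro τ hτ
    exact derivWithin_of_mem_nhds (Icc_mem_nhds hτ.1 hτ.2)
  constructor
  · have h1 : AEStronglyMeasurable (derivWithin ψ (Set.Icc A B))
        (volume.restrict (Set.Ioo A B)) :=
      (hcont.mono Set.Ioo_subset_Icc_self).aestronglyMeasurable measurableSet_Ioo
    refine h1.congr ?_
    refine (ae_restrict_iff' measurableSet_Ioo).2 (Filter.Eventually.of_forall ?_)
    exact heq
  · obtain ⟨C, hC⟩ := isCompact_Icc.exists_bound_of_continuousOn hcont
    refine ⟨C, fun τ hτ => ?_⟩
    rw [← heq τ hτ]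
    simpa [Real.norm_eq_abs] using hC τ (Set.Ioo_subset_Icc_self hτ)

lemma pderiv_update (n : ℕ) (i : Fin n) (f : (Fin n → ℝ) → ℝ) (t : Fin n → ℝ) (τ : ℝ) :
    pderiv n i f (Function.update t i τ) = deriv (fun s => f (Function.update t i s)) τ := by
  simp [pderiv, Function.update_idem]

/-- `partK` written via the 1-D slice `ψ s = f (update t i s)`. -/
lemma partK_eq (n : ℕ) (a b : Fin n → ℝ) (i : Fin n) (p q : ℝ) (κ : ℝ → ℝ)
    (f : (Fin n → ℝ) → ℝ) (t : Fin n → ℝ) :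
    partK n a b i p q κ f t
      = p * ∫ τ in (a i)..(t i), (κ (t i - τ) * f (Function.update t i τ)
          + q * ∫ σ in (t i)..(b i), κ (σ - t i) * f (Function.update t i σ)) := rfl


lemma partK_add_smul {n : ℕ} {a b : Fin n → ℝ} {i : Fin n} {p q : ℝ} {κ : ℝ → ℝ}
    {g D₁ D₂ : (Fin n → ℝ) → ℝ} {ε : ℝ} {t : Fin n → ℝ}
    (hD : ∀ τ ∈ Set.Ioo (a i) (b i),
      g (Function.update t i τ)
        = D₁ (Function.update t i τ) + ε * D₂ (Function.update t i τ))
    (hai : a i ≤ t i) (hbi : t i ≤ b i) (hbb : t i < b i)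
    (h1l : IntervalIntegrable (fun τ => κ (t i - τ) * D₁ (Function.update t i τ)) volume (a i) (t i))
    (h1r : IntervalIntegrable (fun τ => κ (τ - t i) * D₁ (Function.update t i τ)) volume (t i) (b i))
    (h2l : IntervalIntegrable (fun τ => κ (t i - τ) * D₂ (Function.update t i τ)) volume (a i) (t i))
    (h2r : IntervalIntegrable (fun τ => κ (τ - t i) * D₂ (Function.update t i τ)) volume (t i) (b i)) :
    partK n a b i p q κ g t
      = partK n a b i p q κ D₁ t + ε * partK n a b i p q κ D₂ t := by
  have hIoc1 : Set.Ioc (a i) (t i) ⊆ Set.Ioo (a i) (b i) :=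
    fun x hx => ⟨hx.1, lt_of_le_of_lt hx.2 hbb⟩
  have haeR : ∀ᵐ x : ℝ ∂volume, x ∈ Set.Ioc (t i) (b i) → x ∈ Set.Ioo (a i) (b i) := by
    have hb0 : (volume : Measure ℝ) {b i} = 0 := Real.volume_singleton
    filter_upwards [measure_eq_zero_iff_ae_notMem.1 hb0] with x hx hx2
    exact ⟨lt_of_le_of_lt hai hx2.1, lt_of_le_of_ne hx2.2 hx⟩
  -- inner integral splits
  have hinner : (∫ σ in (t i)..(b i), κ (σ - t i) * g (Function.update t i σ))
      = (∫ σ in (t i)..(b i), κ (σ - t i) * D₁ (Function.update t i σ))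
        + ε * ∫ σ in (t i)..(b i), κ (σ - t i) * D₂ (Function.update t i σ) := by
    have e : (∫ σ in (t i)..(b i), κ (σ - t i) * g (Function.update t i σ))
        = ∫ σ in (t i)..(b i), (κ (σ - t i) * D₁ (Function.update t i σ)
            + ε * (κ (σ - t i) * D₂ (Function.update t i σ))) := by
      apply intervalIntegral.integral_congr_ae
      rw [Set.uIoc_of_le hbi]
      filter_upwards [haeR] with x hx hx2
      rw [hD x (hx hx2)]; ring
    rw [e, intervalIntegral.integral_add h1r (h2r.const_mul ε),
      intervalIntegral.integral_const_mul]
  rw [partK_eq, partK_eq, partK_eq, hinner]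
  have houter : (∫ τ in (a i)..(t i), (κ (t i - τ) * g (Function.update t i τ)
        + q * ((∫ σ in (t i)..(b i), κ (σ - t i) * D₁ (Function.update t i σ))
          + ε * ∫ σ in (t i)..(b i), κ (σ - t i) * D₂ (Function.update t i σ))))
      = (∫ τ in (a i)..(t i), ((κ (t i - τ) * D₁ (Function.update t i τ)
          + q * ∫ σ in (t i)..(b i), κ (σ - t i) * D₁ (Function.update t i σ))
        + ε * (κ (t i - τ) * D₂ (Function.update t i τ)
          + q * ∫ σ in (t i)..(b i), κ (σ - t i) * D₂ (Function.update t i σ)))) := by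
    apply intervalIntegral.integral_congr_ae
    rw [Set.uIoc_of_le hai]
    filter_upwards with x hx2
    rw [hD x (hIoc1 hx2)]; ring
  rw [houter,
    intervalIntegral.integral_add (h1l.add (intervalIntegrable_const))
      ((h2l.add (intervalIntegrable_const)).const_mul ε),
    intervalIntegral.integral_const_mul]
  ring

lemma mem_box_iff {n : ℕ} {a b t : Fin n → ℝ} :
    t ∈ box n a b ↔ ∀ i, a i < t i ∧ t i < b i := by
  simp [box, Set.mem_univ_pi, Set.mem_Ioo]

lemma mem_closedBox_iff {n : ℕ} {a b t : Fin n → ℝ} :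
    t ∈ closedBox n a b ↔ ∀ i, a i ≤ t i ∧ t i ≤ b i := by
  constructor
  · intro h i; exact h i (Set.mem_univ i)
  · intro h i _; exact h i

lemma box_subset_closedBox {n : ℕ} {a b : Fin n → ℝ} : box n a b ⊆ closedBox n a b := by
  intro t ht
  rw [mem_box_iff] at ht
  rw [mem_closedBox_iff]
  exact fun i => ⟨(ht i).1.le, (ht i).2.le⟩

lemma isOpen_box {n : ℕ} {a b : Fin n → ℝ} : IsOpen (box n a b) :=
  isOpen_set_pi Set.finite_univ fun i _ => isOpen_Ioo

lemma isCompact_closedBox {n : ℕ} {a b : Fin n → ℝ} : IsCompact (closedBox n a b) :=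
  isCompact_univ_pi fun _ => isCompact_Icc

lemma update_mem_closedBox {n : ℕ} {a b t : Fin n → ℝ} {i : Fin n} {s : ℝ}
    (ht : t ∈ box n a b) (hs : s ∈ Set.Icc (a i) (b i)) :
    Function.update t i s ∈ closedBox n a b := by
  rw [mem_closedBox_iff]
  intro j
  rcases eq_or_ne j i with rfl | hj
  · simpa using hs
  · rw [Function.update_of_ne hj]
    exact ⟨((mem_box_iff.1 ht) j).1.le, ((mem_box_iff.1 ht) j).2.le⟩

lemma update_mem_box {n : ℕ} {a b t : Fin n → ℝ} {i : Fin n} {s : ℝ}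
    (ht : t ∈ box n a b) (hs : s ∈ Set.Ioo (a i) (b i)) :
    Function.update t i s ∈ box n a b := by
  rw [mem_box_iff]
  intro j
  rcases eq_or_ne j i with rfl | hj
  · simpa using hs
  · rw [Function.update_of_ne hj]
    exact (mem_box_iff.1 ht) j

lemma slice_contDiffOn {n : ℕ} {a b : Fin n → ℝ} {w : (Fin n → ℝ) → ℝ}
    (hw : ContDiffOn ℝ 1 w (closedBox n a b)) {t : Fin n → ℝ} (ht : t ∈ box n a b) (i : Fin n) :
    ContDiffOn ℝ 1 (fun s => w (Function.update t i s)) (Set.Icc (a i) (b i)) := by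
  refine hw.comp ((contDiff_update 1 t i).contDiffOn) ?_
  intro s hs
  exact update_mem_closedBox ht hs

lemma slice_differentiableAt {n : ℕ} {a b : Fin n → ℝ} {w : (Fin n → ℝ) → ℝ}
    (hw : ContDiffOn ℝ 1 w (closedBox n a b)) {t : Fin n → ℝ} (ht : t ∈ box n a b) {i : Fin n}
    {τ : ℝ} (hτ : τ ∈ Set.Ioo (a i) (b i)) :
    DifferentiableAt ℝ (fun s => w (Function.update t i s)) τ := by
  have hmem : Function.update t i τ ∈ box n a b := update_mem_box ht hτ
  have hdw : DifferentiableAt ℝ w (Function.update t i τ) := by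
    refine (hw.differentiableOn one_ne_zero).differentiableAt ?_
    exact Filter.mem_of_superset (isOpen_box.mem_nhds hmem) box_subset_closedBox
  exact (hdw.hasFDerivAt.comp_hasDerivAt τ (hasDerivAt_update t i τ)).differentiableAt

lemma partB_add_smul {n : ℕ} {a b : Fin n → ℝ} {i : Fin n} {p q : ℝ} {κ : ℝ → ℝ}
    {w₁ w₂ : (Fin n → ℝ) → ℝ} {ε : ℝ} {t : Fin n → ℝ}
    (hai : a i ≤ t i) (hbi : t i ≤ b i) (hbb : t i < b i)
    (hdiff1 : ∀ τ ∈ Set.Ioo (a i) (b i), DifferentiableAt ℝ (fun s => w₁ (Function.update t i s)) τ)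
    (hdiff2 : ∀ τ ∈ Set.Ioo (a i) (b i), DifferentiableAt ℝ (fun s => w₂ (Function.update t i s)) τ)
    (h1l : IntervalIntegrable (fun τ => κ (t i - τ) * pderiv n i w₁ (Function.update t i τ)) volume (a i) (t i))
    (h1r : IntervalIntegrable (fun τ => κ (τ - t i) * pderiv n i w₁ (Function.update t i τ)) volume (t i) (b i))
    (h2l : IntervalIntegrable (fun τ => κ (t i - τ) * pderiv n i w₂ (Function.update t i τ)) volume (a i) (t i))
    (h2r : IntervalIntegrable (fun τ => κ (τ - t i) * pderiv n i w₂ (Function.update t i τ)) volume (t i) (b i)) :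
    partB n a b i p q κ (fun s => w₁ s + ε * w₂ s) t
      = partB n a b i p q κ w₁ t + ε * partB n a b i p q κ w₂ t := by
  unfold partB
  refine partK_add_smul ?_ hai hbi hbb h1l h1r h2l h2r
  intro τ hτ
  rw [pderiv_update, pderiv_update, pderiv_update]
  have e : (fun s => (fun s => w₁ s + ε * w₂ s) (Function.update t i s))
      = fun s => w₁ (Function.update t i s) + ε * w₂ (Function.update t i s) := rfl
  rw [e, deriv_fun_add (hdiff1 τ hτ) ((hdiff2 τ hτ).const_mul ε),
    deriv_const_mul ε (hdiff2 τ hτ)]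

lemma slice_intInt_val {n : ℕ} {a b : Fin n → ℝ} {i : Fin n} {κ : ℝ → ℝ}
    (hκ : IntegrableOn κ (Set.Ioo 0 (b i - a i))) {w : (Fin n → ℝ) → ℝ}
    (hw : ContinuousOn w (closedBox n a b)) {t : Fin n → ℝ} (ht : t ∈ box n a b) :
    IntervalIntegrable (fun τ => κ (t i - τ) * w (Function.update t i τ)) volume (a i) (t i) ∧
    IntervalIntegrable (fun τ => κ (τ - t i) * w (Function.update t i τ)) volume (t i) (b i) := by
  have hti := (mem_box_iff.1 ht) i
  have hψ : ContinuousOn (fun s => w (Function.update t i s)) (Set.Icc (a i) (b i)) := by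
    refine hw.comp (contDiff_update (𝕜 := ℝ) 1 t i).continuous.continuousOn ?_
    intro s hs; exact update_mem_closedBox ht hs
  obtain ⟨C, hC⟩ := isCompact_Icc.exists_bound_of_continuousOn hψ
  have hbd : ∀ S : Set ℝ, S ⊆ Set.Icc (a i) (b i) →
      ∃ C', ∀ τ ∈ S, |w (Function.update t i τ)| ≤ C' := by
    intro S hS
    exact ⟨C, fun τ hτ => by simpa [Real.norm_eq_abs] using hC τ (hS hτ)⟩
  have hmeas : ∀ S : Set ℝ, MeasurableSet S → S ⊆ Set.Icc (a i) (b i) →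
      AEStronglyMeasurable (fun τ => w (Function.update t i τ)) (volume.restrict S) := by
    intro S hSm hS
    exact (hψ.mono hS).aestronglyMeasurable hSm
  constructor
  · exact aux_intInt_left hκ hti.1.le hti.2.le
      (hmeas _ measurableSet_Ioo fun x hx => ⟨hx.1.le, hx.2.le.trans hti.2.le⟩)
      (hbd _ fun x hx => ⟨hx.1.le, hx.2.le.trans hti.2.le⟩)
  · exact aux_intInt_right hκ hti.1.le hti.2.le
      (hmeas _ measurableSet_Ioo fun x hx => ⟨hti.1.le.trans hx.1.le, hx.2.le⟩)
      (hbd _ fun x hx => ⟨hti.1.le.trans hx.1.le, hx.2.le⟩)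

lemma slice_intInt_deriv {n : ℕ} {a b : Fin n → ℝ} {i : Fin n} {κ : ℝ → ℝ}
    (hκ : IntegrableOn κ (Set.Ioo 0 (b i - a i))) {w : (Fin n → ℝ) → ℝ}
    (hw : ContDiffOn ℝ 1 w (closedBox n a b)) {t : Fin n → ℝ} (ht : t ∈ box n a b) :
    IntervalIntegrable (fun τ => κ (t i - τ) * pderiv n i w (Function.update t i τ)) volume (a i) (t i) ∧
    IntervalIntegrable (fun τ => κ (τ - t i) * pderiv n i w (Function.update t i τ)) volume (t i) (b i) := by
  have hti := (mem_box_iff.1 ht) i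
  have hab : a i < b i := hti.1.trans hti.2
  have hψ := slice_contDiffOn hw ht i
  obtain ⟨hmeas, C, hC⟩ := aux_deriv_meas_bd hab hψ
  have heq : (fun τ => pderiv n i w (Function.update t i τ))
      = fun τ => deriv (fun s => w (Function.update t i s)) τ := by
    funext τ; exact pderiv_update n i w t τ
  have h1 : Set.Ioo (a i) (t i) ⊆ Set.Ioo (a i) (b i) := Set.Ioo_subset_Ioo le_rfl hti.2.le
  have h2 : Set.Ioo (t i) (b i) ⊆ Set.Ioo (a i) (b i) := Set.Ioo_subset_Ioo hti.1.le le_rfl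
  rw [show (fun τ => κ (t i - τ) * pderiv n i w (Function.update t i τ))
      = fun τ => κ (t i - τ) * deriv (fun s => w (Function.update t i s)) τ by
    funext τ; rw [pderiv_update],
    show (fun τ => κ (τ - t i) * pderiv n i w (Function.update t i τ))
      = fun τ => κ (τ - t i) * deriv (fun s => w (Function.update t i s)) τ by
    funext τ; rw [pderiv_update]]
  constructor
  · exact aux_intInt_left hκ hti.1.le hti.2.le
      (hmeas.mono_measure (Measure.restrict_mono h1 le_rfl))
      ⟨C, fun τ hτ => hC τ (h1 hτ)⟩
  · exact aux_intInt_right hκ hti.1.le hti.2.le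
      (hmeas.mono_measure (Measure.restrict_mono h2 le_rfl))
      ⟨C, fun τ hτ => hC τ (h2 hτ)⟩


lemma pi_sum_single {N : ℕ} (f : Fin N → ℝ) :
    (∑ k, f k • (Pi.single k (1:ℝ) : Fin N → ℝ)) = f := by
  funext j
  rw [Finset.sum_apply]
  simp [Pi.single_apply]

lemma pi_sum_single2 {n N : ℕ} (B : Fin n → Fin N → ℝ) :
    (∑ i, ∑ k, B i k • (Pi.single i (Pi.single k (1:ℝ) : Fin N → ℝ) : Fin n → Fin N → ℝ)) = B := by
  funext j
  rw [Finset.sum_apply]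
  simp only [Finset.sum_apply, Pi.smul_apply, Pi.single_apply, smul_eq_mul]
  funext l
  rw [Finset.sum_comm]
  simp [smul_ite, Finset.sum_ite_eq, Pi.single_apply]

lemma clm_pi_single_apply {n N : ℕ} (i : Fin n) (w : Fin N → ℝ) :
    (ContinuousLinearMap.pi (Pi.single i (ContinuousLinearMap.id ℝ (Fin N → ℝ)) :
        ∀ _ : Fin n, (Fin N → ℝ) →L[ℝ] (Fin N → ℝ))) w
      = (Pi.single i w : Fin n → Fin N → ℝ) := by
  funext j
  rcases eq_or_ne j i with rfl | hj
  · simp [ContinuousLinearMap.pi_apply]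
  · simp [ContinuousLinearMap.pi_apply, Pi.single_eq_of_ne hj]


lemma sum_mk4 {ι A B C D : Type*} [AddCommMonoid A] [AddCommMonoid B] [AddCommMonoid C]
    [AddCommMonoid D] (s : Finset ι) (f1 : ι → A) (f2 : ι → B) (f3 : ι → C) (f4 : ι → D) :
    (∑ x ∈ s, ((f1 x, f2 x, f3 x, f4 x) : A × B × C × D))
      = (∑ x ∈ s, f1 x, ∑ x ∈ s, f2 x, ∑ x ∈ s, f3 x, ∑ x ∈ s, f4 x) := by
  simp [Prod.ext_iff, Prod.fst_sum, Prod.snd_sum]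

end AuxNCI

/-- Lemma (necessary condition of invariance): if the functional
`𝒥[u] = ∫_{Δ_n} F(t, u, ∇_{B_{P¹}}^α u, ∇_{K_{P²}}^β u) dt` is invariant under the
family of transformations `ū_ε(t) = u(t) + ε ξ(t, u(t))` (i.e. the integrals over every
subbox `Δ_n^* ⊆ Δ_n` agree for all ε), then
`Σ_k ( ∂F/∂u_k ξ_k + Σ_i [ ∂F/∂(B u_k) ⋅ B^{α_i}(ξ_k) + ∂F/∂(K u_k) ⋅ K^{β_i}(ξ_k) ] ) = 0`
on `Δ_n`. Here `k1α i` is the kernel `k_{1−α_i}` and `kβ i` the kernel `k_{β_i}`. -/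


theorem necessary_condition_of_invariance
    (n N : ℕ) (a b : Fin n → ℝ) (hab : ∀ j, a j < b j)
    (α β : Fin n → ℝ) (hα : ∀ i, 0 < α i ∧ α i < 1) (hβ : ∀ i, 0 < β i ∧ β i < 1)
    (p1 q1 p2 q2 : Fin n → ℝ)
    (k1α kβ : Fin n → ℝ → ℝ)
    (hk1α : ∀ i, IntegrableOn (k1α i) (Set.Ioo 0 (b i - a i)))
    (hkβ : ∀ i, IntegrableOn (kβ i) (Set.Ioo 0 (b i - a i)))
    (F : (Fin n → ℝ) → (Fin N → ℝ) → (Fin n → Fin N → ℝ) → (Fin n → Fin N → ℝ) → ℝ)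
    (hF : ContDiff ℝ 1 (fun x : (Fin n → ℝ) × (Fin N → ℝ) ×
      (Fin n → Fin N → ℝ) × (Fin n → Fin N → ℝ) => F x.1 x.2.1 x.2.2.1 x.2.2.2))
    (u : (Fin n → ℝ) → Fin N → ℝ)
    -- admissibility of u
    (hu : ContDiffOn ℝ 1 u (closedBox n a b))
    (huB : ∀ i k, ContinuousOn
      (fun t => partB n a b i (p1 i) (q1 i) (k1α i) (fun s => u s k) t) (closedBox n a b))
    (huK : ∀ i k, ContinuousOn
      (fun t => partK n a b i (p2 i) (q2 i) (kβ i) (fun s => u s k) t) (closedBox n a b))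
    -- the generator ξ of the family of transformations
    (ξ : (Fin n → ℝ) → (Fin N → ℝ) → Fin N → ℝ)
    (hξ : ContDiff ℝ 1 (fun x : (Fin n → ℝ) × (Fin N → ℝ) => ξ x.1 x.2))
    (hξB : ∀ i k, ContinuousOn
      (fun t => partB n a b i (p1 i) (q1 i) (k1α i) (fun s => ξ s (u s) k) t)
      (closedBox n a b))
    (hξK : ∀ i k, ContinuousOn
      (fun t => partK n a b i (p2 i) (q2 i) (kβ i) (fun s => ξ s (u s) k) t)
      (closedBox n a b))
    -- invariance: for every ε and every subbox Δ_n^* ⊆ Δ_n the integrals agree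
    (hinv : ∀ ε : ℝ, ∀ a' b' : Fin n → ℝ, box n a' b' ⊆ box n a b →
      (∫ t in box n a' b',
        F t (u t) (gradB n N a b p1 q1 k1α u t) (gradK n N a b p2 q2 kβ u t)) =
      ∫ t in box n a' b',
        F t (fun k => u t k + ε * ξ t (u t) k)
          (gradB n N a b p1 q1 k1α (fun s k => u s k + ε * ξ s (u s) k) t)
          (gradK n N a b p2 q2 kβ (fun s k => u s k + ε * ξ s (u s) k) t)) :
    ∀ t ∈ box n a b,
      (∑ k : Fin N,
        (dFu n N F k t (u t) (gradB n N a b p1 q1 k1α u t) (gradK n N a b p2 q2 kβ u t)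
            * ξ t (u t) k
         + ∑ i : Fin n,
            (dFG n N F i k t (u t) (gradB n N a b p1 q1 k1α u t)
                (gradK n N a b p2 q2 kβ u t)
              * partB n a b i (p1 i) (q1 i) (k1α i) (fun s => ξ s (u s) k) t
             + dFH n N F i k t (u t) (gradB n N a b p1 q1 k1α u t)
                (gradK n N a b p2 q2 kβ u t)
              * partK n a b i (p2 i) (q2 i) (kβ i) (fun s => ξ s (u s) k) t))) = 0 := by
  classical
  intro t₀ ht₀
  have hsub : box n a b ⊆ closedBox n a b := box_subset_closedBox
  have ht₀c : t₀ ∈ closedBox n a b := hsub ht₀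
  -- component smoothness
  have hcw : ∀ k, ContDiffOn ℝ 1 (fun s => u s k) (closedBox n a b) :=
    fun k => (contDiffOn_pi.1 hu) k
  have hξcomp : ContDiffOn ℝ 1 (fun s => ξ s (u s)) (closedBox n a b) := by
    have h1 : ContDiffOn ℝ 1 (fun s : Fin n → ℝ => (s, u s)) (closedBox n a b) :=
      contDiffOn_id.prodMk hu
    exact hξ.comp_contDiffOn h1
  have hξw : ∀ k, ContDiffOn ℝ 1 (fun s => ξ s (u s) k) (closedBox n a b) :=
    fun k => (contDiffOn_pi.1 hξcomp) k
  -- continuity of the gradient matrices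
  have hGBu_c : ContinuousOn (gradB n N a b p1 q1 k1α u) (closedBox n a b) := by
    refine continuousOn_pi.2 fun i => continuousOn_pi.2 fun k => ?_
    exact huB i k
  have hGKu_c : ContinuousOn (gradK n N a b p2 q2 kβ u) (closedBox n a b) := by
    refine continuousOn_pi.2 fun i => continuousOn_pi.2 fun k => ?_
    exact huK i k
  have hGBξ_c : ContinuousOn (gradB n N a b p1 q1 k1α (fun s k => ξ s (u s) k)) (closedBox n a b) := by
    refine continuousOn_pi.2 fun i => continuousOn_pi.2 fun k => ?_
    exact hξB i k
  have hGKξ_c : ContinuousOn (gradK n N a b p2 q2 kβ (fun s k => ξ s (u s) k)) (closedBox n a b) := by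
    refine continuousOn_pi.2 fun i => continuousOn_pi.2 fun k => ?_
    exact hξK i k
  set Fh : (Fin n → ℝ) × (Fin N → ℝ) × (Fin n → Fin N → ℝ) × (Fin n → Fin N → ℝ) → ℝ :=
    fun x => F x.1 x.2.1 x.2.2.1 x.2.2.2 with hFhdef
  have hFh : ContDiff ℝ 1 Fh := hF
  set pt : (Fin n → ℝ) → (Fin n → ℝ) × (Fin N → ℝ) × (Fin n → Fin N → ℝ) × (Fin n → Fin N → ℝ) :=
    fun t => (t, u t, gradB n N a b p1 q1 k1α u t, gradK n N a b p2 q2 kβ u t) with hptdef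
  set vv : (Fin n → ℝ) → (Fin n → ℝ) × (Fin N → ℝ) × (Fin n → Fin N → ℝ) × (Fin n → Fin N → ℝ) :=
    fun t => ((0 : Fin n → ℝ), ξ t (u t), gradB n N a b p1 q1 k1α (fun s k => ξ s (u s) k) t,
      gradK n N a b p2 q2 kβ (fun s k => ξ s (u s) k) t) with hvvdef
  have hpt_c : ContinuousOn pt (closedBox n a b) := by
    rw [hptdef]
    exact continuousOn_id.prodMk (hu.continuousOn.prodMk (hGBu_c.prodMk hGKu_c))
  have hv_c : ContinuousOn vv (closedBox n a b) := by
    rw [hvvdef]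
    exact continuousOn_const.prodMk (hξcomp.continuousOn.prodMk (hGBξ_c.prodMk hGKξ_c))
  -- key linearity along the family of transformations
  have key : ∀ (ε : ℝ), ∀ t ∈ box n a b,
      F t (fun k => u t k + ε * ξ t (u t) k)
        (gradB n N a b p1 q1 k1α (fun s k => u s k + ε * ξ s (u s) k) t)
        (gradK n N a b p2 q2 kβ (fun s k => u s k + ε * ξ s (u s) k) t)
      = Fh (pt t + ε • vv t) := by
    intro ε t ht
    have hti := mem_box_iff.1 ht
    have c2 : gradB n N a b p1 q1 k1α (fun s k => u s k + ε * ξ s (u s) k) t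
        = gradB n N a b p1 q1 k1α u t
          + ε • gradB n N a b p1 q1 k1α (fun s k => ξ s (u s) k) t := by
      funext i k
      have h1 := slice_intInt_deriv (i := i) (hk1α i) (hcw k) ht
      have h2 := slice_intInt_deriv (i := i) (hk1α i) (hξw k) ht
      have hmain := partB_add_smul (p := p1 i) (q := q1 i) (κ := k1α i)
        (w₁ := fun s => u s k) (w₂ := fun s => ξ s (u s) k) (ε := ε) (t := t)
        (hti i).1.le (hti i).2.le (hti i).2
        (fun τ hτ => slice_differentiableAt (hcw k) ht hτ)
        (fun τ hτ => slice_differentiableAt (hξw k) ht hτ)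
        h1.1 h1.2 h2.1 h2.2
      simpa [gradB] using hmain
    have c3 : gradK n N a b p2 q2 kβ (fun s k => u s k + ε * ξ s (u s) k) t
        = gradK n N a b p2 q2 kβ u t
          + ε • gradK n N a b p2 q2 kβ (fun s k => ξ s (u s) k) t := by
      funext i k
      have h1 := slice_intInt_val (i := i) (hkβ i) ((hcw k).continuousOn) ht
      have h2 := slice_intInt_val (i := i) (hkβ i) ((hξw k).continuousOn) ht
      have hmain := partK_add_smul (p := p2 i) (q := q2 i) (κ := kβ i)
        (g := fun s => u s k + ε * ξ s (u s) k)
        (D₁ := fun s => u s k) (D₂ := fun s => ξ s (u s) k) (ε := ε) (t := t)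
        (fun τ _ => rfl)
        (hti i).1.le (hti i).2.le (hti i).2
        h1.1 h1.2 h2.1 h2.2
      simpa [gradK] using hmain
    have c1 : (fun k => u t k + ε * ξ t (u t) k) = u t + ε • ξ t (u t) := by
      funext k; simp
    rw [c1, c2, c3, hFhdef, hptdef, hvvdef]
    simp [Prod.mk_add_mk, Prod.smul_mk]
  -- the Noether integrand
  set Φ : (Fin n → ℝ) → ℝ := fun t => fderiv ℝ Fh (pt t) (vv t) with hΦdef
  have hfderiv_cont : Continuous (fderiv ℝ Fh) := hFh.continuous_fderiv one_ne_zero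
  have hΦ_c : ContinuousOn Φ (closedBox n a b) := by
    rw [hΦdef]
    exact (hfderiv_cont.comp_continuousOn hpt_c).clm_apply hv_c
  have hdiffFh : Differentiable ℝ Fh := hFh.differentiable one_ne_zero
  have hGc : ∀ e : ℝ, ContinuousOn (fun t => Fh (pt t + e • vv t)) (closedBox n a b) :=
    fun e => hFh.continuous.comp_continuousOn (hpt_c.add (hv_c.const_smul e))
  have hG'c : ∀ e : ℝ, ContinuousOn (fun t => fderiv ℝ Fh (pt t + e • vv t) (vv t))
      (closedBox n a b) := fun e =>
    (hfderiv_cont.comp_continuousOn (hpt_c.add (hv_c.const_smul e))).clm_apply hv_c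
  -- Step A: the integral of Φ over every compactly contained subbox vanishes
  have intzero : ∀ a' b' : Fin n → ℝ, (∀ j, a' j < b' j) → closedBox n a' b' ⊆ box n a b →
      (∫ t in box n a' b', Φ t) = 0 := by
    intro a' b' hab' hsubS
    have hSm : MeasurableSet (box n a' b') := (isOpen_box).measurableSet
    have hS1 : box n a' b' ⊆ closedBox n a' b' := box_subset_closedBox
    have hS2 : box n a' b' ⊆ box n a b := hS1.trans hsubS
    have hS3 : box n a' b' ⊆ closedBox n a b := hS2.trans hsub
    have hS4 : closedBox n a' b' ⊆ closedBox n a b := hsubS.trans hsub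
    have hScomp : IsCompact (closedBox n a' b') := isCompact_closedBox
    have hSfin : volume (box n a' b') < ⊤ :=
      lt_of_le_of_lt (measure_mono hS1) hScomp.measure_lt_top
    have hcurve : ∀ (t : Fin n → ℝ) (e : ℝ),
        HasDerivAt (fun e : ℝ => pt t + e • vv t) (vv t) e := by
      intro t e
      have h1 : HasDerivAt (fun e : ℝ => e • vv t) ((1:ℝ) • vv t) e :=
        (hasDerivAt_id e).smul_const (vv t)
      simpa using h1.const_add (pt t)
    have hGdiff : ∀ (t : Fin n → ℝ) (e : ℝ),
        HasDerivAt (fun e : ℝ => Fh (pt t + e • vv t))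
          (fderiv ℝ Fh (pt t + e • vv t) (vv t)) e :=
      fun t e => (hdiffFh _).hasFDerivAt.comp_hasDerivAt e (hcurve t e)
    -- uniform bound on the derivative over a compact slab
    have hKcomp : IsCompact ((Set.Icc (-1:ℝ) 1) ×ˢ closedBox n a' b') :=
      isCompact_Icc.prod hScomp
    have hjc : ContinuousOn
        (fun z : ℝ × (Fin n → ℝ) => fderiv ℝ Fh (pt z.2 + z.1 • vv z.2) (vv z.2))
        ((Set.Icc (-1:ℝ) 1) ×ˢ closedBox n a' b') := by
      have hmap : Set.MapsTo (fun z : ℝ × (Fin n → ℝ) => z.2)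
          ((Set.Icc (-1:ℝ) 1) ×ˢ closedBox n a' b') (closedBox n a b) :=
        fun z hz => hS4 hz.2
      have hA : ContinuousOn (fun z : ℝ × (Fin n → ℝ) => pt z.2)
          ((Set.Icc (-1:ℝ) 1) ×ˢ closedBox n a' b') :=
        hpt_c.comp continuous_snd.continuousOn hmap
      have hB : ContinuousOn (fun z : ℝ × (Fin n → ℝ) => vv z.2)
          ((Set.Icc (-1:ℝ) 1) ×ˢ closedBox n a' b') :=
        hv_c.comp continuous_snd.continuousOn hmap
      have hC : ContinuousOn (fun z : ℝ × (Fin n → ℝ) => pt z.2 + z.1 • vv z.2)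
          ((Set.Icc (-1:ℝ) 1) ×ˢ closedBox n a' b') :=
        hA.add (continuous_fst.continuousOn.smul hB)
      exact (hfderiv_cont.comp_continuousOn hC).clm_apply hB
    obtain ⟨C, hC⟩ := hKcomp.exists_bound_of_continuousOn hjc
    have main := hasDerivAt_integral_of_dominated_loc_of_deriv_le
      (μ := volume.restrict (box n a' b')) (x₀ := (0:ℝ))
      (F := fun e t => Fh (pt t + e • vv t))
      (F' := fun e t => fderiv ℝ Fh (pt t + e • vv t) (vv t))
      (bound := fun _ => C) (Metric.ball_mem_nhds 0 one_pos)
      (Filter.Eventually.of_forall fun e =>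
        (((hGc e).mono hS3).aestronglyMeasurable hSm))
      ((((hGc 0).mono hS4).integrableOn_compact hScomp).mono_set hS1)
      (((hG'c 0).mono hS3).aestronglyMeasurable hSm)
      ?_ ?_ ?_
    rotate_left
    · filter_upwards [self_mem_ae_restrict hSm] with t ht e he
      have hmem : ((e, t) : ℝ × (Fin n → ℝ)) ∈ (Set.Icc (-1:ℝ) 1) ×ˢ closedBox n a' b' := by
        refine ⟨?_, hS1 ht⟩
        have : |e| < 1 := by simpa [Real.dist_eq] using he
        exact ⟨by linarith [neg_abs_le e], by linarith [le_abs_self e]⟩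
      exact hC _ hmem
    · exact (integrableOn_const_iff).2 (Or.inr hSfin)
    · filter_upwards with t e _he
      exact hGdiff t e
    obtain ⟨-, hder⟩ := main
    have hconst : (fun e : ℝ => ∫ t in box n a' b', Fh (pt t + e • vv t))
        = fun _ => ∫ t in box n a' b', Fh (pt t + (0:ℝ) • vv t) := by
      funext e
      have l0 : ∀ t ∈ box n a' b',
          F t (u t) (gradB n N a b p1 q1 k1α u t) (gradK n N a b p2 q2 kβ u t)
            = Fh (pt t + (0:ℝ) • vv t) := by
        intro t ht
        have := key 0 t (hS2 ht)
        simpa using this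
      have l1 : (∫ t in box n a' b',
          F t (u t) (gradB n N a b p1 q1 k1α u t) (gradK n N a b p2 q2 kβ u t))
          = ∫ t in box n a' b', Fh (pt t + (0:ℝ) • vv t) :=
        setIntegral_congr_fun hSm l0
      have l2 : (∫ t in box n a' b',
          F t (fun k => u t k + e * ξ t (u t) k)
            (gradB n N a b p1 q1 k1α (fun s k => u s k + e * ξ s (u s) k) t)
            (gradK n N a b p2 q2 kβ (fun s k => u s k + e * ξ s (u s) k) t))
          = ∫ t in box n a' b', Fh (pt t + e • vv t) :=
        setIntegral_congr_fun hSm fun t ht => key e t (hS2 ht)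
      rw [← l2, ← (hinv e a' b' hS2), l1]
    rw [hconst] at hder
    have hz := hder.unique (hasDerivAt_const 0 _)
    rw [hΦdef]
    rw [← hz]
    apply setIntegral_congr_fun hSm
    intro t _
    simp
  -- Step B : Φ t₀ = 0
  have hΦt₀ : Φ t₀ = 0 := by
    by_contra hc
    have habs : 0 < |Φ t₀| := abs_pos.2 hc
    have hcwa : ContinuousWithinAt Φ (closedBox n a b) t₀ := hΦ_c t₀ ht₀c
    obtain ⟨δc, hδc, hδcP⟩ := Metric.continuousWithinAt_iff.1 hcwa (|Φ t₀| / 2) (by linarith)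
    obtain ⟨r, hr, hrsub⟩ := Metric.isOpen_iff.1 (isOpen_box) t₀ ht₀
    set δ : ℝ := min (r / 2) (δc / 2) with hδdef
    have hδpos : 0 < δ := lt_min (by linarith) (by linarith)
    set a' : Fin n → ℝ := fun j => t₀ j - δ with ha'
    set b' : Fin n → ℝ := fun j => t₀ j + δ with hb'
    have hab' : ∀ j, a' j < b' j := fun j => by
      simp only [ha', hb']; linarith
    have hdistle : ∀ x ∈ closedBox n a' b', dist x t₀ ≤ δ := by
      intro x hx
      rw [dist_pi_le_iff hδpos.le]
      intro j
      have hj := (mem_closedBox_iff.1 hx) j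
      simp only [ha', hb'] at hj
      rw [Real.dist_eq, abs_le]
      constructor <;> linarith [hj.1, hj.2]
    have hcb_sub : closedBox n a' b' ⊆ box n a b := by
      intro x hx
      apply hrsub
      have h1 : dist x t₀ ≤ δ := hdistle x hx
      have h2 : δ < r := lt_of_le_of_lt (min_le_left _ _) (by linarith)
      exact Metric.mem_ball.2 (lt_of_le_of_lt h1 h2)
    have hzero := intzero a' b' hab' hcb_sub
    have hSm : MeasurableSet (box n a' b') := (isOpen_box).measurableSet
    have hS1 : box n a' b' ⊆ closedBox n a' b' := box_subset_closedBox
    have hScomp : IsCompact (closedBox n a' b') := isCompact_closedBox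
    have hSfin : volume (box n a' b') < ⊤ :=
      lt_of_le_of_lt (measure_mono hS1) hScomp.measure_lt_top
    -- the volume is positive
    have hvol : volume (box n a' b') = ∏ j, ENNReal.ofReal (b' j - a' j) := by
      rw [show box n a' b' = Set.pi Set.univ fun j => Set.Ioo (a' j) (b' j) from rfl]
      exact Real.volume_pi_Ioo
    have hvolpos : 0 < (volume (box n a' b')).toReal := by
      refine ENNReal.toReal_pos ?_ hSfin.ne
      rw [hvol]
      refine Finset.prod_ne_zero_iff.2 fun j _ => ?_
      simp only [ne_eq, ENNReal.ofReal_eq_zero, not_le]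
      linarith [hab' j]
    -- integrability and bound
    have hΦS_c : ContinuousOn Φ (closedBox n a' b') := hΦ_c.mono (hcb_sub.trans hsub)
    have hint : IntegrableOn Φ (box n a' b') :=
      (hΦS_c.integrableOn_compact hScomp).mono_set hS1
    have hbd : ∀ x ∈ box n a' b', ‖Φ x - Φ t₀‖ ≤ |Φ t₀| / 2 := by
      intro x hx
      have hxc : x ∈ closedBox n a b := hsub (hcb_sub (hS1 hx))
      have hd : dist x t₀ < δc :=
        lt_of_le_of_lt (hdistle x (hS1 hx)) (lt_of_le_of_lt (min_le_right _ _) (by linarith))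
      have := hδcP hxc hd
      rw [Real.dist_eq] at this
      rw [Real.norm_eq_abs]
      linarith
    have hmeassub : AEStronglyMeasurable (fun x => Φ x - Φ t₀)
        (volume.restrict (box n a' b')) :=
      (hint.sub ((integrableOn_const_iff).2 (Or.inr hSfin))).aestronglyMeasurable
    have hnorm := norm_setIntegral_le_of_norm_le_const hSfin hbd
    have hIsub : (∫ x in box n a' b', (Φ x - Φ t₀))
        = - ((volume (box n a' b')).toReal • Φ t₀) := by
      rw [integral_sub hint ((integrableOn_const_iff).2 (Or.inr hSfin))]
      rw [hzero, setIntegral_const]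
      rw [zero_sub]; rfl
    rw [hIsub] at hnorm
    rw [norm_neg, norm_smul, Real.norm_eq_abs, Real.norm_eq_abs,
      abs_of_nonneg (ENNReal.toReal_nonneg)] at hnorm
    unfold Measure.real at hnorm
    nlinarith
  -- Step C: identify the Noether expression with Φ t₀
  have hptt : pt t₀ = (t₀, u t₀, gradB n N a b p1 q1 k1α u t₀, gradK n N a b p2 q2 kβ u t₀) := by
    rw [hptdef]
  have hvvt : vv t₀ = ((0 : Fin n → ℝ), ξ t₀ (u t₀),
      gradB n N a b p1 q1 k1α (fun s k => ξ s (u s) k) t₀,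
      gradK n N a b p2 q2 kβ (fun s k => ξ s (u s) k) t₀) := by
    rw [hvvdef]
  have hdFu : ∀ k, dFu n N F k t₀ (u t₀) (gradB n N a b p1 q1 k1α u t₀)
        (gradK n N a b p2 q2 kβ u t₀)
      = fderiv ℝ Fh (pt t₀) (((0 : Fin n → ℝ), (Pi.single k (1:ℝ) : Fin N → ℝ),
          (0 : Fin n → Fin N → ℝ), (0 : Fin n → Fin N → ℝ))) := by
    intro k
    have hcur : HasDerivAt (fun y : ℝ => ((t₀, Function.update (u t₀) k y,
          gradB n N a b p1 q1 k1α u t₀, gradK n N a b p2 q2 kβ u t₀) :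
            (Fin n → ℝ) × (Fin N → ℝ) × (Fin n → Fin N → ℝ) × (Fin n → Fin N → ℝ)))
        (((0 : Fin n → ℝ), (Pi.single k (1:ℝ) : Fin N → ℝ),
          (0 : Fin n → Fin N → ℝ), (0 : Fin n → Fin N → ℝ))) (u t₀ k) :=
      (hasDerivAt_const _ _).prodMk ((hasDerivAt_update _ k _).prodMk
        ((hasDerivAt_const _ _).prodMk (hasDerivAt_const _ _)))
    have hcomp := (hdiffFh _).hasFDerivAt.comp_hasDerivAt (u t₀ k) hcur
    rw [Function.update_eq_self, ← hptt] at hcomp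
    exact hcomp.deriv
  have hdFG : ∀ (i : Fin n) (k : Fin N), dFG n N F i k t₀ (u t₀)
        (gradB n N a b p1 q1 k1α u t₀) (gradK n N a b p2 q2 kβ u t₀)
      = fderiv ℝ Fh (pt t₀) (((0 : Fin n → ℝ), (0 : Fin N → ℝ),
          (Pi.single i (Pi.single k (1:ℝ) : Fin N → ℝ) : Fin n → Fin N → ℝ),
          (0 : Fin n → Fin N → ℝ))) := by
    intro i k
    have hinner : HasDerivAt (fun y : ℝ =>
        Function.update (gradB n N a b p1 q1 k1α u t₀) i
          (Function.update (gradB n N a b p1 q1 k1α u t₀ i) k y))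
        (Pi.single i (Pi.single k (1:ℝ) : Fin N → ℝ) : Fin n → Fin N → ℝ)
        (gradB n N a b p1 q1 k1α u t₀ i k) := by
      have h1 : HasDerivAt (Function.update (gradB n N a b p1 q1 k1α u t₀ i) k)
          (Pi.single k (1:ℝ) : Fin N → ℝ) (gradB n N a b p1 q1 k1α u t₀ i k) :=
        hasDerivAt_update _ k _
      have h2 := (hasFDerivAt_update (𝕜 := ℝ) (gradB n N a b p1 q1 k1α u t₀)
        (i := i) (Function.update (gradB n N a b p1 q1 k1α u t₀ i) k
          (gradB n N a b p1 q1 k1α u t₀ i k))).comp_hasDerivAt _ h1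
      rw [clm_pi_single_apply] at h2
      exact h2
    have hcur : HasDerivAt (fun y : ℝ => ((t₀, u t₀,
          Function.update (gradB n N a b p1 q1 k1α u t₀) i
            (Function.update (gradB n N a b p1 q1 k1α u t₀ i) k y),
          gradK n N a b p2 q2 kβ u t₀) :
            (Fin n → ℝ) × (Fin N → ℝ) × (Fin n → Fin N → ℝ) × (Fin n → Fin N → ℝ)))
        (((0 : Fin n → ℝ), (0 : Fin N → ℝ),
          (Pi.single i (Pi.single k (1:ℝ) : Fin N → ℝ) : Fin n → Fin N → ℝ),
          (0 : Fin n → Fin N → ℝ))) (gradB n N a b p1 q1 k1α u t₀ i k) :=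
      (hasDerivAt_const _ _).prodMk ((hasDerivAt_const _ _).prodMk
        (hinner.prodMk (hasDerivAt_const _ _)))
    have hcomp := (hdiffFh _).hasFDerivAt.comp_hasDerivAt _ hcur
    rw [Function.update_eq_self, Function.update_eq_self, ← hptt] at hcomp
    exact hcomp.deriv
  have hdFH : ∀ (i : Fin n) (k : Fin N), dFH n N F i k t₀ (u t₀)
        (gradB n N a b p1 q1 k1α u t₀) (gradK n N a b p2 q2 kβ u t₀)
      = fderiv ℝ Fh (pt t₀) (((0 : Fin n → ℝ), (0 : Fin N → ℝ),
          (0 : Fin n → Fin N → ℝ),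
          (Pi.single i (Pi.single k (1:ℝ) : Fin N → ℝ) : Fin n → Fin N → ℝ))) := by
    intro i k
    have hinner : HasDerivAt (fun y : ℝ =>
        Function.update (gradK n N a b p2 q2 kβ u t₀) i
          (Function.update (gradK n N a b p2 q2 kβ u t₀ i) k y))
        (Pi.single i (Pi.single k (1:ℝ) : Fin N → ℝ) : Fin n → Fin N → ℝ)
        (gradK n N a b p2 q2 kβ u t₀ i k) := by
      have h1 : HasDerivAt (Function.update (gradK n N a b p2 q2 kβ u t₀ i) k)
          (Pi.single k (1:ℝ) : Fin N → ℝ) (gradK n N a b p2 q2 kβ u t₀ i k) :=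
        hasDerivAt_update _ k _
      have h2 := (hasFDerivAt_update (𝕜 := ℝ) (gradK n N a b p2 q2 kβ u t₀)
        (i := i) (Function.update (gradK n N a b p2 q2 kβ u t₀ i) k
          (gradK n N a b p2 q2 kβ u t₀ i k))).comp_hasDerivAt _ h1
      rw [clm_pi_single_apply] at h2
      exact h2
    have hcur : HasDerivAt (fun y : ℝ => ((t₀, u t₀, gradB n N a b p1 q1 k1α u t₀,
          Function.update (gradK n N a b p2 q2 kβ u t₀) i
            (Function.update (gradK n N a b p2 q2 kβ u t₀ i) k y)) :
            (Fin n → ℝ) × (Fin N → ℝ) × (Fin n → Fin N → ℝ) × (Fin n → Fin N → ℝ)))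
        (((0 : Fin n → ℝ), (0 : Fin N → ℝ), (0 : Fin n → Fin N → ℝ),
          (Pi.single i (Pi.single k (1:ℝ) : Fin N → ℝ) : Fin n → Fin N → ℝ)))
        (gradK n N a b p2 q2 kβ u t₀ i k) :=
      (hasDerivAt_const _ _).prodMk ((hasDerivAt_const _ _).prodMk
        ((hasDerivAt_const _ _).prodMk hinner))
    have hcomp := (hdiffFh _).hasFDerivAt.comp_hasDerivAt _ hcur
    rw [Function.update_eq_self, Function.update_eq_self, ← hptt] at hcomp
    exact hcomp.deriv
  -- decomposition of the direction vector into coordinate directions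
  have h1 : (∑ k, ξ t₀ (u t₀) k • (((0 : Fin n → ℝ), (Pi.single k (1:ℝ) : Fin N → ℝ),
        (0 : Fin n → Fin N → ℝ), (0 : Fin n → Fin N → ℝ)) :
          (Fin n → ℝ) × (Fin N → ℝ) × (Fin n → Fin N → ℝ) × (Fin n → Fin N → ℝ)))
      = (((0 : Fin n → ℝ), ξ t₀ (u t₀), (0 : Fin n → Fin N → ℝ), (0 : Fin n → Fin N → ℝ))) := by
    have e : ∀ k : Fin N, ξ t₀ (u t₀) k • (((0 : Fin n → ℝ), (Pi.single k (1:ℝ) : Fin N → ℝ),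
        (0 : Fin n → Fin N → ℝ), (0 : Fin n → Fin N → ℝ)) :
          (Fin n → ℝ) × (Fin N → ℝ) × (Fin n → Fin N → ℝ) × (Fin n → Fin N → ℝ))
        = (((0 : Fin n → ℝ), ξ t₀ (u t₀) k • (Pi.single k (1:ℝ) : Fin N → ℝ),
          (0 : Fin n → Fin N → ℝ), (0 : Fin n → Fin N → ℝ))) := by
      intro k; simp [Prod.smul_mk]
    rw [Finset.sum_congr rfl fun k _ => e k, sum_mk4]
    simp [pi_sum_single]
  have h2 : (∑ i, ∑ k, gradB n N a b p1 q1 k1α (fun s k => ξ s (u s) k) t₀ i k •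
        (((0 : Fin n → ℝ), (0 : Fin N → ℝ),
          (Pi.single i (Pi.single k (1:ℝ) : Fin N → ℝ) : Fin n → Fin N → ℝ),
          (0 : Fin n → Fin N → ℝ)) :
          (Fin n → ℝ) × (Fin N → ℝ) × (Fin n → Fin N → ℝ) × (Fin n → Fin N → ℝ)))
      = (((0 : Fin n → ℝ), (0 : Fin N → ℝ),
          gradB n N a b p1 q1 k1α (fun s k => ξ s (u s) k) t₀, (0 : Fin n → Fin N → ℝ))) := by
    have e : ∀ i : Fin n, (∑ k, gradB n N a b p1 q1 k1α (fun s k => ξ s (u s) k) t₀ i k •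
        (((0 : Fin n → ℝ), (0 : Fin N → ℝ),
          (Pi.single i (Pi.single k (1:ℝ) : Fin N → ℝ) : Fin n → Fin N → ℝ),
          (0 : Fin n → Fin N → ℝ)) :
          (Fin n → ℝ) × (Fin N → ℝ) × (Fin n → Fin N → ℝ) × (Fin n → Fin N → ℝ)))
        = (((0 : Fin n → ℝ), (0 : Fin N → ℝ),
          ∑ k, gradB n N a b p1 q1 k1α (fun s k => ξ s (u s) k) t₀ i k •
            (Pi.single i (Pi.single k (1:ℝ) : Fin N → ℝ) : Fin n → Fin N → ℝ),
          (0 : Fin n → Fin N → ℝ))) := by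
      intro i
      have e' : ∀ k : Fin N, gradB n N a b p1 q1 k1α (fun s k => ξ s (u s) k) t₀ i k •
          (((0 : Fin n → ℝ), (0 : Fin N → ℝ),
            (Pi.single i (Pi.single k (1:ℝ) : Fin N → ℝ) : Fin n → Fin N → ℝ),
            (0 : Fin n → Fin N → ℝ)) :
            (Fin n → ℝ) × (Fin N → ℝ) × (Fin n → Fin N → ℝ) × (Fin n → Fin N → ℝ))
          = (((0 : Fin n → ℝ), (0 : Fin N → ℝ),
            gradB n N a b p1 q1 k1α (fun s k => ξ s (u s) k) t₀ i k •
              (Pi.single i (Pi.single k (1:ℝ) : Fin N → ℝ) : Fin n → Fin N → ℝ),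
            (0 : Fin n → Fin N → ℝ))) := by
        intro k; simp [Prod.smul_mk]
      rw [Finset.sum_congr rfl fun k _ => e' k, sum_mk4]
      simp
    rw [Finset.sum_congr rfl fun i _ => e i, sum_mk4]
    simp [pi_sum_single2]
  have h3 : (∑ i, ∑ k, gradK n N a b p2 q2 kβ (fun s k => ξ s (u s) k) t₀ i k •
        (((0 : Fin n → ℝ), (0 : Fin N → ℝ), (0 : Fin n → Fin N → ℝ),
          (Pi.single i (Pi.single k (1:ℝ) : Fin N → ℝ) : Fin n → Fin N → ℝ)) :
          (Fin n → ℝ) × (Fin N → ℝ) × (Fin n → Fin N → ℝ) × (Fin n → Fin N → ℝ)))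
      = (((0 : Fin n → ℝ), (0 : Fin N → ℝ), (0 : Fin n → Fin N → ℝ),
          gradK n N a b p2 q2 kβ (fun s k => ξ s (u s) k) t₀)) := by
    have e : ∀ i : Fin n, (∑ k, gradK n N a b p2 q2 kβ (fun s k => ξ s (u s) k) t₀ i k •
        (((0 : Fin n → ℝ), (0 : Fin N → ℝ), (0 : Fin n → Fin N → ℝ),
          (Pi.single i (Pi.single k (1:ℝ) : Fin N → ℝ) : Fin n → Fin N → ℝ)) :
          (Fin n → ℝ) × (Fin N → ℝ) × (Fin n → Fin N → ℝ) × (Fin n → Fin N → ℝ)))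
        = (((0 : Fin n → ℝ), (0 : Fin N → ℝ), (0 : Fin n → Fin N → ℝ),
          ∑ k, gradK n N a b p2 q2 kβ (fun s k => ξ s (u s) k) t₀ i k •
            (Pi.single i (Pi.single k (1:ℝ) : Fin N → ℝ) : Fin n → Fin N → ℝ))) := by
      intro i
      have e' : ∀ k : Fin N, gradK n N a b p2 q2 kβ (fun s k => ξ s (u s) k) t₀ i k •
          (((0 : Fin n → ℝ), (0 : Fin N → ℝ), (0 : Fin n → Fin N → ℝ),
            (Pi.single i (Pi.single k (1:ℝ) : Fin N → ℝ) : Fin n → Fin N → ℝ)) :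
            (Fin n → ℝ) × (Fin N → ℝ) × (Fin n → Fin N → ℝ) × (Fin n → Fin N → ℝ))
          = (((0 : Fin n → ℝ), (0 : Fin N → ℝ), (0 : Fin n → Fin N → ℝ),
            gradK n N a b p2 q2 kβ (fun s k => ξ s (u s) k) t₀ i k •
              (Pi.single i (Pi.single k (1:ℝ) : Fin N → ℝ) : Fin n → Fin N → ℝ))) := by
        intro k; simp [Prod.smul_mk]
      rw [Finset.sum_congr rfl fun k _ => e' k, sum_mk4]
      simp
    rw [Finset.sum_congr rfl fun i _ => e i, sum_mk4]
    simp [pi_sum_single2]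
  have hdec : vv t₀
      = (∑ k, ξ t₀ (u t₀) k • (((0 : Fin n → ℝ), (Pi.single k (1:ℝ) : Fin N → ℝ),
          (0 : Fin n → Fin N → ℝ), (0 : Fin n → Fin N → ℝ)) :
          (Fin n → ℝ) × (Fin N → ℝ) × (Fin n → Fin N → ℝ) × (Fin n → Fin N → ℝ)))
        + ((∑ i, ∑ k, gradB n N a b p1 q1 k1α (fun s k => ξ s (u s) k) t₀ i k •
            (((0 : Fin n → ℝ), (0 : Fin N → ℝ),
              (Pi.single i (Pi.single k (1:ℝ) : Fin N → ℝ) : Fin n → Fin N → ℝ),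
              (0 : Fin n → Fin N → ℝ))))
          + (∑ i, ∑ k, gradK n N a b p2 q2 kβ (fun s k => ξ s (u s) k) t₀ i k •
            (((0 : Fin n → ℝ), (0 : Fin N → ℝ), (0 : Fin n → Fin N → ℝ),
              (Pi.single i (Pi.single k (1:ℝ) : Fin N → ℝ) : Fin n → Fin N → ℝ))))) := by
    rw [hvvt, h1, h2, h3]
    simp [Prod.mk_add_mk]
  -- expand Φ t₀ linearly
  have hΦval : Φ t₀
      = (∑ k, ξ t₀ (u t₀) k * fderiv ℝ Fh (pt t₀) (((0 : Fin n → ℝ),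
          (Pi.single k (1:ℝ) : Fin N → ℝ), (0 : Fin n → Fin N → ℝ), (0 : Fin n → Fin N → ℝ))))
        + ((∑ i, ∑ k, gradB n N a b p1 q1 k1α (fun s k => ξ s (u s) k) t₀ i k *
            fderiv ℝ Fh (pt t₀) (((0 : Fin n → ℝ), (0 : Fin N → ℝ),
              (Pi.single i (Pi.single k (1:ℝ) : Fin N → ℝ) : Fin n → Fin N → ℝ),
              (0 : Fin n → Fin N → ℝ))))
          + (∑ i, ∑ k, gradK n N a b p2 q2 kβ (fun s k => ξ s (u s) k) t₀ i k *
            fderiv ℝ Fh (pt t₀) (((0 : Fin n → ℝ), (0 : Fin N → ℝ), (0 : Fin n → Fin N → ℝ),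
              (Pi.single i (Pi.single k (1:ℝ) : Fin N → ℝ) : Fin n → Fin N → ℝ))))) := by
    have : Φ t₀ = fderiv ℝ Fh (pt t₀) (vv t₀) := by rw [hΦdef]
    rw [this, hdec]
    simp only [map_add, map_sum, _root_.map_smul, smul_eq_mul]
  -- put everything together
  have hfinal : (∑ k : Fin N,
      (dFu n N F k t₀ (u t₀) (gradB n N a b p1 q1 k1α u t₀) (gradK n N a b p2 q2 kβ u t₀)
          * ξ t₀ (u t₀) k
       + ∑ i : Fin n,
          (dFG n N F i k t₀ (u t₀) (gradB n N a b p1 q1 k1α u t₀)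
              (gradK n N a b p2 q2 kβ u t₀)
            * partB n a b i (p1 i) (q1 i) (k1α i) (fun s => ξ s (u s) k) t₀
           + dFH n N F i k t₀ (u t₀) (gradB n N a b p1 q1 k1α u t₀)
              (gradK n N a b p2 q2 kβ u t₀)
            * partK n a b i (p2 i) (q2 i) (kβ i) (fun s => ξ s (u s) k) t₀))) = Φ t₀ := by
    rw [hΦval]
    simp only [hdFu, hdFG, hdFH]
    have hBg : ∀ (i : Fin n) (k : Fin N),
        partB n a b i (p1 i) (q1 i) (k1α i) (fun s => ξ s (u s) k) t₀
          = gradB n N a b p1 q1 k1α (fun s k => ξ s (u s) k) t₀ i k := fun i k => rfl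
    have hKg : ∀ (i : Fin n) (k : Fin N),
        partK n a b i (p2 i) (q2 i) (kβ i) (fun s => ξ s (u s) k) t₀
          = gradK n N a b p2 q2 kβ (fun s k => ξ s (u s) k) t₀ i k := fun i k => rfl
    simp only [hBg, hKg]
    rw [Finset.sum_add_distrib]
    congr 1
    · exact Finset.sum_congr rfl fun k _ => mul_comm _ _
    · simp only [Finset.sum_add_distrib]
      rw [Finset.sum_comm (f := fun k i =>
          fderiv ℝ Fh (pt t₀) (((0 : Fin n → ℝ), (0 : Fin N → ℝ),
            (Pi.single i (Pi.single k (1:ℝ) : Fin N → ℝ) : Fin n → Fin N → ℝ),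
            (0 : Fin n → Fin N → ℝ)))
          * gradB n N a b p1 q1 k1α (fun s k => ξ s (u s) k) t₀ i k)]
      rw [Finset.sum_comm (f := fun k i =>
          fderiv ℝ Fh (pt t₀) (((0 : Fin n → ℝ), (0 : Fin N → ℝ), (0 : Fin n → Fin N → ℝ),
            (Pi.single i (Pi.single k (1:ℝ) : Fin N → ℝ) : Fin n → Fin N → ℝ)))
          * gradK n N a b p2 q2 kβ (fun s k => ξ s (u s) k) t₀ i k)]
      congr 1
      · exact Finset.sum_congr rfl fun i _ => Finset.sum_congr rfl fun k _ => mul_comm _ _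
      · exact Finset.sum_congr rfl fun i _ => Finset.sum_congr rfl fun k _ => mul_comm _ _
  exact hfinal.trans hΦt₀
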